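/- Let α : M → ℝ be positive and θ-Hölder continuous on a compact metric space, f : M → M continuous, and suppose there are constants C₀ > 0 and κ ∈ (0,1) such that d(f^i(p), f^i(q)) ≤ C₀·κ^i for all 0 ≤ i ≤ n−1. Then there is a constant C ≥ 1, independent of n, p, q, such that C^{-1} ≤ α_n(q)/α_n(p) ≤ C. -/

import Mathlib

/-- |log a - log b| ≤ |a - b| / m when a, b ≥ m > 0. -/
lemma log_dist_le {m a b : ℝ} (hm : 0 < m) (ha : m ≤ a) (hb : m ≤ b) :
    |Real.log a - Real.log b| ≤ |a - b| / m := by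
  have ha0 : 0 < a := hm.trans_le ha
  have hb0 : 0 < b := hm.trans_le hb
  have key : ∀ x y : ℝ, m ≤ x → m ≤ y →
      Real.log x - Real.log y ≤ |x - y| / m := by
    intro x y hx hy
    have hx0 : 0 < x := hm.trans_le hx
    have hy0 : 0 < y := hm.trans_le hy
    have h1 : Real.log x - Real.log y = Real.log (x / y) := (Real.log_div hx0.ne' hy0.ne').symm
    have h2 : Real.log (x / y) ≤ x / y - 1 := Real.log_le_sub_one_of_pos (div_pos hx0 hy0)
    have h3 : x / y - 1 = (x - y) / y := by field_simp
    have h4 : (x - y) / y ≤ |x - y| / m := by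
      rcases le_total x y with h | h
      · have : (x - y) / y ≤ 0 := div_nonpos_of_nonpos_of_nonneg (by linarith) hy0.le
        exact this.trans (div_nonneg (abs_nonneg _) hm.le)
      · have : |x - y| = x - y := abs_of_nonneg (by linarith)
        rw [this]
        exact div_le_div_of_nonneg_left (by linarith) hm hy
    linarith [h1 ▸ h2, h3 ▸ h4]
  rcases le_total (Real.log a) (Real.log b) with h | h
  · rw [abs_of_nonpos (by linarith), abs_sub_comm]
    have := key b a hb ha
    linarith
  · rw [abs_of_nonneg (by linarith)]
    exact key a b ha hb

/-- Distortion estimate along exponentially shadowing orbits (Lemma `constalpha`). -/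
theorem stmt_2 {M : Type*} [MetricSpace M] [CompactSpace M]
    (f : M → M) (hf : Continuous f) (α : M → ℝ) (hpos : ∀ x, 0 < α x)
    (θ : ℝ) (hθ : 0 < θ) (Ch : ℝ)
    (hHolder : ∀ x y, |α x - α y| ≤ Ch * dist x y ^ θ)
    (C₀ κ : ℝ) (hC₀ : 0 < C₀) (hκ0 : 0 < κ) (hκ1 : κ < 1) :
    ∃ C : ℝ, 1 ≤ C ∧ ∀ (n : ℕ) (p q : M),
      (∀ i < n, dist (f^[i] p) (f^[i] q) ≤ C₀ * κ ^ i) →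
      C⁻¹ ≤ (∏ i ∈ Finset.range n, α (f^[i] q)) / (∏ i ∈ Finset.range n, α (f^[i] p)) ∧
        (∏ i ∈ Finset.range n, α (f^[i] q)) / (∏ i ∈ Finset.range n, α (f^[i] p)) ≤ C := by
  rcases isEmpty_or_nonempty M with hM | hM
  · exact ⟨1, le_refl 1, fun n p q _ => isEmptyElim p⟩
  -- replace Ch by its positive part
  set D : ℝ := max Ch 0 with hD
  have hD0 : 0 ≤ D := le_max_right _ _
  have hHolder' : ∀ x y, |α x - α y| ≤ D * dist x y ^ θ := fun x y =>
    (hHolder x y).trans (by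
      have : (0:ℝ) ≤ dist x y ^ θ := Real.rpow_nonneg dist_nonneg θ
      exact mul_le_mul_of_nonneg_right (le_max_left _ _) this)
  -- α is continuous
  have hαcont : Continuous α := by
    rw [continuous_iff_continuousAt]
    intro x
    have h1 : ContinuousAt (fun y => D * dist y x ^ θ) x := by
      have hdx : ContinuousAt (fun y => dist y x) x :=
        (continuous_id.dist continuous_const).continuousAt
      exact continuousAt_const.mul (hdx.rpow_const (Or.inr hθ.le))
    have hlim : Filter.Tendsto (fun y => D * dist y x ^ θ) (nhds x) (nhds 0) := by
      have := h1.tendsto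
      simpa [dist_self, Real.zero_rpow hθ.ne'] using this
    rw [ContinuousAt, Metric.tendsto_nhds]
    intro ε hε
    have := (Metric.tendsto_nhds.mp hlim) ε hε
    filter_upwards [this] with y hy
    calc dist (α y) (α x) = |α y - α x| := Real.dist_eq _ _
      _ ≤ D * dist y x ^ θ := hHolder' y x
      _ ≤ |D * dist y x ^ θ - 0| := by
          rw [sub_zero]; exact le_abs_self _
      _ < ε := by rw [← Real.dist_eq]; simpa using hy
  -- positive minimum of α
  obtain ⟨x₀, -, hx₀⟩ := isCompact_univ.exists_isMinOn Set.univ_nonempty (hαcont.continuousOn)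
  set m : ℝ := α x₀ with hm
  have hm0 : 0 < m := hpos x₀
  have hmle : ∀ x, m ≤ α x := fun x => hx₀ (Set.mem_univ x)
  -- κ^θ < 1
  have hκθ0 : 0 ≤ κ ^ θ := Real.rpow_nonneg hκ0.le θ
  have hκθ1 : κ ^ θ < 1 := Real.rpow_lt_one hκ0.le hκ1 hθ
  set K : ℝ := D / m * C₀ ^ θ * (1 - κ ^ θ)⁻¹ with hK
  have hK0 : 0 ≤ K :=
    mul_nonneg (mul_nonneg (div_nonneg hD0 hm0.le) (Real.rpow_nonneg hC₀.le θ))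
      (inv_nonneg.2 (by linarith))
  refine ⟨Real.exp K, Real.one_le_exp hK0, fun n p q hd => ?_⟩
  set P : ℝ := ∏ i ∈ Finset.range n, α (f^[i] p) with hP
  set Q : ℝ := ∏ i ∈ Finset.range n, α (f^[i] q) with hQ
  have hP0 : 0 < P := Finset.prod_pos fun i _ => hpos _
  have hQ0 : 0 < Q := Finset.prod_pos fun i _ => hpos _
  have hlog : |Real.log (Q / P)| ≤ K := by
    have hlogdiv : Real.log (Q / P) = ∑ i ∈ Finset.range n,
        (Real.log (α (f^[i] q)) - Real.log (α (f^[i] p))) := by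
      rw [Real.log_div hQ0.ne' hP0.ne', hQ, hP,
        Real.log_prod (fun i _ => (hpos _).ne'),
        Real.log_prod (fun i _ => (hpos _).ne'), ← Finset.sum_sub_distrib]
    rw [hlogdiv]
    calc |∑ i ∈ Finset.range n, (Real.log (α (f^[i] q)) - Real.log (α (f^[i] p)))|
        ≤ ∑ i ∈ Finset.range n, |Real.log (α (f^[i] q)) - Real.log (α (f^[i] p))| :=
          Finset.abs_sum_le_sum_abs _ _
      _ ≤ ∑ i ∈ Finset.range n, D / m * C₀ ^ θ * (κ ^ θ) ^ i := by
          apply Finset.sum_le_sum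
          intro i hi
          have hdi := hd i (Finset.mem_range.mp hi)
          have h1 : |Real.log (α (f^[i] q)) - Real.log (α (f^[i] p))| ≤
              |α (f^[i] q) - α (f^[i] p)| / m := log_dist_le hm0 (hmle _) (hmle _)
          have h2 : |α (f^[i] q) - α (f^[i] p)| ≤ D * dist (f^[i] q) (f^[i] p) ^ θ :=
            hHolder' _ _
          have h3 : dist (f^[i] q) (f^[i] p) ^ θ ≤ (C₀ * κ ^ i) ^ θ := by
            apply Real.rpow_le_rpow dist_nonneg _ hθ.le
            rw [dist_comm]; exact hdi
          have h4 : (C₀ * κ ^ i) ^ θ = C₀ ^ θ * (κ ^ θ) ^ i := by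
            rw [Real.mul_rpow hC₀.le (pow_nonneg hκ0.le i), ← Real.rpow_natCast κ i,
              ← Real.rpow_natCast (κ ^ θ) i, ← Real.rpow_mul hκ0.le, ← Real.rpow_mul hκ0.le,
              mul_comm]
            rw [mul_comm (i:ℝ) θ, mul_comm]
          have h5 : (0:ℝ) ≤ (κ ^ θ) ^ i := pow_nonneg hκθ0 i
          calc |Real.log (α (f^[i] q)) - Real.log (α (f^[i] p))|
              ≤ |α (f^[i] q) - α (f^[i] p)| / m := h1
            _ ≤ D * dist (f^[i] q) (f^[i] p) ^ θ / m := by gcongr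
            _ ≤ D * ((C₀ * κ ^ i) ^ θ) / m := by gcongr
            _ = D / m * C₀ ^ θ * (κ ^ θ) ^ i := by rw [h4]; ring
      _ = D / m * C₀ ^ θ * ∑ i ∈ Finset.range n, (κ ^ θ) ^ i := by
          rw [Finset.mul_sum]
      _ ≤ K := by
          rw [hK]
          apply mul_le_mul_of_nonneg_left _
            (mul_nonneg (div_nonneg hD0 hm0.le) (Real.rpow_nonneg hC₀.le θ))
          calc ∑ i ∈ Finset.range n, (κ ^ θ) ^ i
              ≤ ∑' i : ℕ, (κ ^ θ) ^ i :=
                Summable.sum_le_tsum _ (fun i _ => pow_nonneg hκθ0 i)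
                  (summable_geometric_of_lt_one hκθ0 hκθ1)
            _ = (1 - κ ^ θ)⁻¹ := tsum_geometric_of_lt_one hκθ0 hκθ1
  have habs := abs_le.mp hlog
  have hexp : Q / P = Real.exp (Real.log (Q / P)) := (Real.exp_log (div_pos hQ0 hP0)).symm
  constructor
  · rw [← Real.exp_neg, hexp]
    exact Real.exp_le_exp.mpr habs.1
  · rw [hexp]
    exact Real.exp_le_exp.mpr habs.2
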